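/- If f: (0,∞) → ℝ is differentiable at t > 0 and α ∈ (0,1], then the α-fractional derivative of f exists at t and equals D^α(f)(t) = t^{1-α} · f'(t). -/

import Mathlib

open Real Filter

/-- The Katugampola (α-fractional / conformable) derivative of `y` at `t` equals `L`. -/
def hasKatDerivAt (α : ℝ) (y : ℝ → ℝ) (L t : ℝ) : Prop :=
  Filter.Tendsto (fun ε : ℝ => (y (t * Real.exp (ε * t ^ (-α))) - y t) / ε)
    (nhdsWithin 0 {(0 : ℝ)}ᶜ) (nhds L)

theorem katDeriv_of_hasDerivAt (α t : ℝ) (f : ℝ → ℝ) (f' : ℝ)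
    (hα : 0 < α) (hα1 : α ≤ 1) (ht : 0 < t) (hf : HasDerivAt f f' t) :
    hasKatDerivAt α f (t ^ (1 - α) * f') t := by
  have hg : HasDerivAt (fun ε : ℝ => t * Real.exp (ε * t ^ (-α))) (t ^ (1 - α)) 0 := by
    have h1 : HasDerivAt (fun ε : ℝ => ε * t ^ (-α)) (t ^ (-α)) 0 := by
      simpa using (hasDerivAt_id (0 : ℝ)).mul_const (t ^ (-α))
    have h2 := (h1.exp).const_mul t
    have : t * (Real.exp (0 * t ^ (-α)) * t ^ (-α)) = t ^ (1 - α) := by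
      rw [zero_mul, Real.exp_zero, one_mul]
      rw [show (1 : ℝ) - α = 1 + (-α) by ring, Real.rpow_add ht, Real.rpow_one]
    rwa [this] at h2
  have hg0 : t * Real.exp ((0 : ℝ) * t ^ (-α)) = t := by simp
  have hf2 : HasDerivAt f f' (t * Real.exp ((0 : ℝ) * t ^ (-α))) := by rw [hg0]; exact hf
  have hcomp : HasDerivAt (fun ε : ℝ => f (t * Real.exp (ε * t ^ (-α))))
      (t ^ (1 - α) * f') 0 := by
    rw [mul_comm (t ^ (1 - α)) f']
    exact hf2.comp 0 hg
  have := hasDerivAt_iff_tendsto_slope.mp hcomp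
  unfold hasKatDerivAt
  refine this.congr fun ε => ?_
  simp [slope_def_field, hg0]
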